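/- Fix an index i : N and a configuration s, and let s¹ and s⁰ be the configurations agreeing with s at every index j ≠ i, with s¹ i = 1 and s⁰ i = 0. Then the conditional probability under the Boltzmann distribution that node i is in state 1 given the states of all other nodes equals the sigmoid of the local field: P(s¹) / (P(s¹) + P(s⁰)) = σ(b i + ∑_{j ≠ i} w i j * s j). -/

import Mathlib

/-- Boltzmann machine conditional probability: under the Boltzmann
distribution, the conditional probability that node `i` is in state `1` given
the states of all other nodes equals the sigmoid of the local field. -/
theorem boltzmann_machine_conditional_sigmoid
    {N : Type*} [Fintype N] [DecidableEq N]
    (w : N → N → ℝ) (b : N → ℝ)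
    (hsym : ∀ i j, w i j = w j i) (hdiag : ∀ i, w i i = 0)
    (E : (N → ℝ) → ℝ)
    (hE : ∀ s, E s = -(∑ i, b i * s i) - (1 / 2) * ∑ i, ∑ j, w i j * s i * s j)
    (P : (N → ℝ) → ℝ)
    (hP : ∀ s, P s = Real.exp (-E s) /
      ∑ u : N → Bool, Real.exp (-E (fun j => if u j then 1 else 0)))
    (σ : ℝ → ℝ) (hσ : ∀ x, σ x = 1 / (1 + Real.exp (-x)))
    (i : N) (s : N → ℝ) (hs : ∀ j, s j = 0 ∨ s j = 1) :
    P (Function.update s i 1) /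
        (P (Function.update s i 1) + P (Function.update s i 0))
      = σ (b i + ∑ j ∈ Finset.univ.erase i, w i j * s j) := by
  classical
  set t := Finset.univ.erase i with ht
  set L := ∑ j ∈ t, w i j * s j with hL
  set A := ∑ j ∈ t, b j * s j with hA
  set R := ∑ j ∈ t, ∑ k ∈ t, w j k * s j * s k with hR
  have hupd : ∀ (c : ℝ) (j : N), j ∈ t → Function.update s i c j = s j := by
    intro c j hj
    exact Function.update_of_ne (Finset.ne_of_mem_erase hj) _ _
  have hEc : ∀ c : ℝ, E (Function.update s i c)
      = -(b i * c) - c * L - A - (1 / 2) * R := by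
    intro c
    rw [hE]
    have h1 : ∑ j, b j * Function.update s i c j = b i * c + A := by
      rw [← Finset.add_sum_erase _ _ (Finset.mem_univ i), Function.update_self]
      exact congrArg _ (Finset.sum_congr rfl fun j hj => by rw [hupd c j hj])
    have h3 : ∑ k, w i k * Function.update s i c i * Function.update s i c k
        = c * L := by
      rw [← Finset.add_sum_erase _ _ (Finset.mem_univ i), Function.update_self,
        hdiag, ← ht]
      have h4 : ∑ k ∈ t, w i k * c * Function.update s i c k = c * L := by
        rw [hL, Finset.mul_sum]
        refine Finset.sum_congr rfl fun k hk => ?_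
        rw [hupd c k hk]; ring
      rw [h4]; ring
    have h2 : ∑ j ∈ t, ∑ k, w j k * Function.update s i c j *
        Function.update s i c k = c * L + R := by
      have : ∀ j ∈ t, ∑ k, w j k * Function.update s i c j *
          Function.update s i c k
          = w i j * s j * c + ∑ k ∈ t, w j k * s j * s k := by
        intro j hj
        rw [← Finset.add_sum_erase _ _ (Finset.mem_univ i), Function.update_self,
          hupd c j hj, ← hsym]
        exact congrArg _ (Finset.sum_congr rfl fun k hk => by rw [hupd c k hk])
      rw [Finset.sum_congr rfl this, Finset.sum_add_distrib, ← hR]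
      congr 1
      rw [hL, Finset.mul_sum]
      exact Finset.sum_congr rfl fun j hj => by ring
    rw [h1, ← Finset.add_sum_erase _ _ (Finset.mem_univ i), h3, h2]
    ring
  have key : Real.exp (-E (Function.update s i 1))
      = Real.exp (b i + L) * Real.exp (-E (Function.update s i 0)) := by
    rw [hEc 1, hEc 0, ← Real.exp_add]
    congr 1; ring
  rw [hP, hP, hσ]
  set Z := ∑ u : N → Bool, Real.exp (-E (fun j => if u j then 1 else 0)) with hZ
  have hZpos : 0 < Z := by
    refine Finset.sum_pos (fun u _ => Real.exp_pos _) ?_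
    exact ⟨fun _ => false, Finset.mem_univ _⟩
  have he0 : 0 < Real.exp (-E (Function.update s i 0)) := Real.exp_pos _
  have hx : 0 < Real.exp (b i + L) := Real.exp_pos _
  rw [key, Real.exp_neg]
  field_simp
  have hone : Real.exp (b i + L) * Real.exp (-L + -b i) = 1 := by
    rw [← Real.exp_add, show b i + L + (-L + -b i) = 0 by ring, Real.exp_zero]
  rw [show -(b i + L) = -L + -b i by ring]
  linear_combination hone
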